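/- Suppose μ_k ≤ 0, 0 < ρ < σ < 1, C = (σ-ρ)/(1-2ρ+σ), g_kᵀ s_k < 0, the Armijo condition f_k − f_{k+1} ≥ −ρ g_kᵀ s_k holds, and μ_k = 2(f_k − f_{k+1}) + (g_k + g_{k+1})ᵀ s_k with g_{k+1}ᵀ s_k ≥ σ g_kᵀ s_k − C μ_k. Then −g_kᵀ s_k + C μ_k ≥ −(1 − σ + ρ) g_kᵀ s_k > 0, i.e., −g_kᵀ d_k + t_k s_kᵀ d_k > 0 where t_k = Cμ_k/‖s_k‖², s_k = α_k d_k, α_k > 0; consequently g_{k+1}ᵀ d_k < d_kᵀ z_k where z_k = y_k + t_k s_k. -/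

import Mathlib

open scoped RealInnerProductSpace

set_option maxHeartbeats 1000000 in
/-- Inequality (3.16): under the modified Wolfe conditions with `μ_k ≤ 0`,
`−g_kᵀ s_k + C μ_k ≥ −(1−σ+ρ) g_kᵀ s_k > 0`, hence `−g_kᵀ d_k + t_k s_kᵀ d_k > 0`
and consequently `g_{k+1}ᵀ d_k < d_kᵀ z_k`. -/
theorem stmt_18 {n : ℕ} (f : EuclideanSpace ℝ (Fin n) → ℝ)
    (hf : Differentiable ℝ f)
    (xk dk : EuclideanSpace ℝ (Fin n)) (αk ρ σ C μ t : ℝ)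
    (zk : EuclideanSpace ℝ (Fin n))
    (hρ : 0 < ρ) (hρσ : ρ < σ) (hσ : σ < 1) (hα : 0 < αk)
    (hC : C = (σ - ρ) / (1 - 2 * ρ + σ))
    (hdesc : ⟪gradient f xk, αk • dk⟫ < 0)
    (harmijo : f xk - f (xk + αk • dk) ≥ -(ρ * ⟪gradient f xk, αk • dk⟫))
    (hμ : μ = 2 * (f xk - f (xk + αk • dk)) +
      ⟪gradient f xk + gradient f (xk + αk • dk), αk • dk⟫)
    (hμneg : μ ≤ 0)
    (ht : t = C * μ / ‖αk • dk‖ ^ 2)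
    (hz : zk = (gradient f (xk + αk • dk) - gradient f xk) + t • (αk • dk))
    (hcurv : ⟪gradient f (xk + αk • dk), αk • dk⟫ ≥
      σ * ⟪gradient f xk, αk • dk⟫ - C * μ) :
    (-⟪gradient f xk, αk • dk⟫ + C * μ ≥
        -((1 - σ + ρ) * ⟪gradient f xk, αk • dk⟫) ∧
      0 < -((1 - σ + ρ) * ⟪gradient f xk, αk • dk⟫)) ∧
    0 < -⟪gradient f xk, dk⟫ + t * ⟪αk • dk, dk⟫ ∧
    ⟪gradient f (xk + αk • dk), dk⟫ < ⟪dk, zk⟫ := by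
  set g := gradient f xk with hg
  set g' := gradient f (xk + αk • dk) with hg'
  set a := ⟪g, αk • dk⟫ with ha
  have hden : (0:ℝ) < 1 - 2 * ρ + σ := by linarith
  have hCpos : 0 < C := by
    rw [hC]; exact div_pos (by linarith) hden
  have hC' : C * (1 - 2 * ρ + σ) = σ - ρ := by
    rw [hC]; exact div_mul_cancel₀ _ hden.ne'
  have hsplit : ⟪g + g', αk • dk⟫ = a + ⟪g', αk • dk⟫ := by
    rw [inner_add_left]
  have hμ' : μ = 2 * (f xk - f (xk + αk • dk)) + (a + ⟪g', αk • dk⟫) := by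
    rw [hμ, hsplit]
  have h1 : μ + C * μ ≥ (1 - 2 * ρ + σ) * a := by nlinarith [harmijo, hcurv]
  have key : C * μ ≥ (σ - ρ) * a := by
    nlinarith [mul_le_mul_of_nonneg_left h1 hCpos.le,
      mul_nonpos_of_nonneg_of_nonpos (mul_self_nonneg C) hμneg]
  have hapos : 0 < -((1 - σ + ρ) * a) := by nlinarith
  have hpos : 0 < -a + C * μ := by nlinarith
  -- geometry
  have hd : dk ≠ 0 := by
    intro h
    have h0 : a = 0 := by rw [ha, h, smul_zero, inner_zero_right]
    rw [h0] at hdesc; exact lt_irrefl _ hdesc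
  have hdn : 0 < ‖dk‖ ^ 2 := pow_pos (norm_pos_iff.mpr hd) 2
  have hnorm : ‖αk • dk‖ ^ 2 = αk ^ 2 * ‖dk‖ ^ 2 := by
    rw [norm_smul, mul_pow, Real.norm_eq_abs, sq_abs]
  have hinner_sd : ⟪αk • dk, dk⟫ = αk * ‖dk‖ ^ 2 := by
    rw [real_inner_smul_left, real_inner_self_eq_norm_sq]
  have hne : αk ^ 2 * ‖dk‖ ^ 2 ≠ 0 := (mul_pos (pow_pos hα 2) hdn).ne'
  have hts : t * ⟪αk • dk, dk⟫ = C * μ / αk := by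
    rw [ht, hnorm, hinner_sd, eq_div_iff hα.ne', div_mul_eq_mul_div,
      div_mul_eq_mul_div, div_eq_iff hne]
    ring
  have hag : a = αk * ⟪g, dk⟫ := by rw [ha, real_inner_smul_right]
  have h2 : 0 < -⟪g, dk⟫ + t * ⟪αk • dk, dk⟫ := by
    rw [hts]
    have hlt : ⟪g, dk⟫ * αk < C * μ := by nlinarith
    have : ⟪g, dk⟫ < C * μ / αk := (lt_div_iff₀ hα).mpr hlt
    linarith
  refine ⟨⟨by nlinarith, hapos⟩, h2, ?_⟩
  have hz' : ⟪dk, zk⟫ = ⟪dk, g'⟫ - ⟪dk, g⟫ + t * ⟪dk, αk • dk⟫ := by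
    rw [hz, inner_add_right, inner_sub_right, real_inner_smul_right]
  have e1 : ⟪dk, g'⟫ = ⟪g', dk⟫ := real_inner_comm _ _
  have e2 : ⟪dk, g⟫ = ⟪g, dk⟫ := real_inner_comm _ _
  have e3 : ⟪dk, αk • dk⟫ = ⟪αk • dk, dk⟫ := real_inner_comm _ _
  rw [hz', e1, e2, e3]
  linarith
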